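/- arXiv:2108.10130 — 2 statements merged into one kernel-verified Lean document; each statement's English description precedes it below -/
import Mathlib

section
/- Combining the telescoped determinant inequality with the logarithm bound: if V_0 = λI_d with λ ≥ ℓ, |s_t| ≤ ℓ, ‖x_t(i)‖₂ ≤ 1, and V_T = λI_d + ∑_{t=1}^T∑_{i∈s_t}x_t(i)x_t(i)ᵀ, then ∑_{t=1}^T∑_{i∈s_t}‖x_t(i)‖²_{V_{t-1}^{-1}} ≤ 2 log det(V_T) − 2d log λ ≤ 2d log((λd + Tℓ)/(λd)). -/
open Matrix BigOperators Real Set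

private lemma epl_psd_vecMulVec {n : Type*} [Fintype n] [DecidableEq n] (x : n → ℝ) :
    (vecMulVec x x).PosSemidef := by
  refine Matrix.PosSemidef.of_dotProduct_mulVec_nonneg ?_ ?_
  · ext i j; simp [vecMulVec_apply, mul_comm]
  · intro y
    have : star y ⬝ᵥ (vecMulVec x x *ᵥ y) = (x ⬝ᵥ y)^2 := by
      simp [vecMulVec_apply, mulVec, dotProduct, Finset.mul_sum, Finset.sum_mul, sq]
      congr 1; ext i; congr 1; ext j; ring
    rw [this]; positivity

private lemma epl_trace_mul_vecMulVec {n : Type*} [Fintype n] [DecidableEq n]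
    (B : Matrix n n ℝ) (x : n → ℝ) :
    (B * vecMulVec x x).trace = x ⬝ᵥ B *ᵥ x := by
  simp [Matrix.trace, Matrix.mul_apply, vecMulVec_apply, dotProduct, mulVec, diag,
    Finset.mul_sum, Finset.sum_mul]
  congr 1; ext i; congr 1; ext j; ring

private lemma epl_one_add_sum_le_prod {ι : Type*} {s : Finset ι} {f : ι → ℝ}
    (hf : ∀ i ∈ s, 0 ≤ f i) : 1 + ∑ i ∈ s, f i ≤ ∏ i ∈ s, (1 + f i) := by
  classical
  induction s using Finset.cons_induction with
  | empty => simp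
  | cons a s ha ih =>
    simp only [Finset.sum_cons, Finset.prod_cons]
    have h1 : ∀ i ∈ s, 0 ≤ f i := fun i hi => hf i (Finset.mem_cons_of_mem hi)
    have h2 : 0 ≤ f a := hf a (Finset.mem_cons_self a s)
    have h3 : (0:ℝ) ≤ ∑ i ∈ s, f i := Finset.sum_nonneg h1
    have := ih h1
    nlinarith

private lemma epl_trace_eq_sum_eigenvalues {n : Type*} [Fintype n] [DecidableEq n]
    {N : Matrix n n ℝ} (hN : N.IsHermitian) :
    N.trace = ∑ i, hN.eigenvalues i := by
  conv_lhs => rw [hN.spectral_theorem, Unitary.conjStarAlgAut_apply]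
  rw [trace_mul_cycle]
  rw [(Matrix.mem_unitaryGroup_iff').mp hN.eigenvectorUnitary.2, Matrix.one_mul, trace_diagonal]
  simp

private lemma epl_det_one_add {n : Type*} [Fintype n] [DecidableEq n]
    {N : Matrix n n ℝ} (hN : N.PosSemidef) :
    1 + N.trace ≤ (1 + N).det := by
  have hH := hN.isHermitian
  set U : Matrix n n ℝ := hH.eigenvectorUnitary.1 with hU
  have hUU' : U * star U = 1 := (Matrix.mem_unitaryGroup_iff).mp hH.eigenvectorUnitary.2
  have hsp : (1:Matrix n n ℝ) + N = U * (1 + Matrix.diagonal (RCLike.ofReal ∘ hH.eigenvalues)) * star U := by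
    rw [Matrix.mul_add, Matrix.add_mul, Matrix.mul_one, hUU']
    congr 1
    exact hH.spectral_theorem
  have hdet : (1 + N).det = ∏ i, (1 + hH.eigenvalues i) := by
    rw [hsp, det_mul_right_comm, hUU', Matrix.one_mul]
    have : (1:Matrix n n ℝ) + Matrix.diagonal (RCLike.ofReal ∘ hH.eigenvalues)
        = Matrix.diagonal (fun i => 1 + hH.eigenvalues i) := by
      rw [← diagonal_one, diagonal_add]
      congr 1
    rw [this, det_diagonal]
  rw [hdet, epl_trace_eq_sum_eigenvalues hH]
  exact epl_one_add_sum_le_prod fun i _ => hN.eigenvalues_nonneg i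

open scoped MatrixOrder in
private lemma epl_det_add_psd {n : Type*} [Fintype n] [DecidableEq n]
    {A M : Matrix n n ℝ} (hA : A.PosDef) (hM : M.PosSemidef) :
    A.det * (1 + (A⁻¹ * M).trace) ≤ (A + M).det := by
  set S := CFC.sqrt A with hSdef
  have hS2 : S * S = A := CFC.sqrt_mul_sqrt_self A hA.posSemidef.nonneg
  have hSherm : S.IsHermitian := (CFC.sqrt_nonneg A).posSemidef.isHermitian
  have hdetS : S.det * S.det = A.det := by rw [← det_mul, hS2]
  have hdetSne : S.det ≠ 0 := by
    intro h
    have := hA.det_pos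
    rw [← hdetS, h, mul_zero] at this
    exact lt_irrefl _ this
  have hSunit : IsUnit S.det := hdetSne.isUnit
  have hSS : S * S⁻¹ = 1 := mul_nonsing_inv S hSunit
  have hSS' : S⁻¹ * S = 1 := nonsing_inv_mul S hSunit
  set N := S⁻¹ * M * S⁻¹ with hNdef
  have hNpsd : N.PosSemidef := by
    have := hM.conjTranspose_mul_mul_same (S⁻¹)
    rwa [hSherm.inv.eq] at this
  have hconj : A + M = S * (1 + N) * S := by
    rw [Matrix.mul_add, Matrix.add_mul, Matrix.mul_one, hS2, hNdef]
    congr 1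
    calc M = (S * S⁻¹) * M * (S⁻¹ * S) := by rw [hSS, hSS', Matrix.one_mul, Matrix.mul_one]
      _ = S * (S⁻¹ * M * S⁻¹) * S := by simp only [Matrix.mul_assoc]
  have htrN : N.trace = (A⁻¹ * M).trace := by
    rw [hNdef, trace_mul_cycle, ← Matrix.mul_inv_rev, hS2]
  calc A.det * (1 + (A⁻¹*M).trace) = A.det * (1 + N.trace) := by rw [htrN]
    _ ≤ A.det * (1 + N).det := by
        have := epl_det_one_add hNpsd
        nlinarith [hA.det_pos]
    _ = (A + M).det := by
        rw [hconj, det_mul, det_mul, ← hdetS]; ring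

private lemma epl_self_le_two_log (x : ℝ) (h0 : 0 ≤ x) (h1 : x ≤ 1) :
    x ≤ 2 * Real.log (1 + x) := by
  have hexp : Real.exp (x/2) ≤ 1 + x := by
    have h2 : 1 - x/2 ≤ Real.exp (-(x/2)) := by
      have := Real.add_one_le_exp (-(x/2)); linarith
    have h3 : Real.exp (x/2) * Real.exp (-(x/2)) = 1 := by
      rw [← Real.exp_add]; simp
    nlinarith [Real.exp_pos (x/2), Real.exp_pos (-(x/2))]
  have := Real.log_le_log (Real.exp_pos _) hexp
  rw [Real.log_exp] at this
  linarith

private lemma epl_sum_log_le {n : Type*} [Fintype n] [Nonempty n] (f : n → ℝ)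
    (hf : ∀ i, 0 < f i) :
    ∑ i, Real.log (f i) ≤ (Fintype.card n) * Real.log ((∑ i, f i) / Fintype.card n) := by
  have hd : (0:ℝ) < Fintype.card n := by positivity
  have key := (StrictConcaveOn.concaveOn strictConcaveOn_log_Ioi).le_map_sum
    (t := Finset.univ) (w := fun _ : n => 1 / (Fintype.card n : ℝ)) (p := f)
    (fun i _ => by positivity)
    (by rw [Finset.sum_const, Finset.card_univ, nsmul_eq_mul]; field_simp)
    (fun i _ => Set.mem_Ioi.mpr (hf i))
  simp only [smul_eq_mul] at key
  rw [← Finset.mul_sum, ← Finset.mul_sum, one_div, inv_mul_eq_div] at key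
  have := mul_le_mul_of_nonneg_left key hd.le
  rw [mul_div_cancel₀ _ hd.ne'] at this
  rw [inv_mul_eq_div] at this
  exact this

/-- Elliptical potential lemma (corrected Lemma 4.2 of C²UCB):
∑_{t,i} ‖x_t(i)‖²_{V_{t-1}⁻¹} ≤ 2 log det(V_T) − 2d log λ ≤ 2d log((λd+Tℓ)/(λd)). -/
theorem stmt13 {d k : ℕ} (hd : 0 < d) (T ℓ : ℕ) (hℓ : 0 < ℓ)
    (lam : ℝ) (hlam : (ℓ : ℝ) ≤ lam)
    (s : ℕ → Finset (Fin k)) (x : ℕ → Fin k → EuclideanSpace ℝ (Fin d))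
    (hx : ∀ t, ∀ i ∈ s t, ‖x t i‖ ≤ 1)
    (hcard : ∀ t, (s t).card ≤ ℓ)
    (Vmat : ℕ → Matrix (Fin d) (Fin d) ℝ)
    (hVmat : ∀ t, Vmat t = lam • (1 : Matrix (Fin d) (Fin d) ℝ) +
      ∑ τ ∈ Finset.range t, ∑ i ∈ s τ, vecMulVec (x τ i) (x τ i)) :
    ∑ t ∈ Finset.range T, ∑ i ∈ s t,
        x t i ⬝ᵥ (Vmat t)⁻¹.mulVec (x t i)
      ≤ 2 * Real.log (Vmat T).det - 2 * d * Real.log lam ∧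
    2 * Real.log (Vmat T).det - 2 * d * Real.log lam
      ≤ 2 * d * Real.log ((lam * d + T * ℓ) / (lam * d)) := by
  have hℓ1 : (1:ℝ) ≤ (ℓ:ℝ) := by exact_mod_cast hℓ
  have hlam0 : 0 < lam := lt_of_lt_of_le one_pos (le_trans hℓ1 hlam)
  -- basic positivity facts
  have hMpsd : ∀ t, (∑ i ∈ s t, vecMulVec (x t i) (x t i) : Matrix (Fin d) (Fin d) ℝ).PosSemidef := by
    intro t
    refine Finset.sum_induction _ _ (fun a b ha hb => ha.add hb) Matrix.PosSemidef.zero ?_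
    exact fun i _ => epl_psd_vecMulVec _
  have hSpsd : ∀ t, (∑ τ ∈ Finset.range t, ∑ i ∈ s τ, vecMulVec (x τ i) (x τ i)
      : Matrix (Fin d) (Fin d) ℝ).PosSemidef := by
    intro t
    refine Finset.sum_induction _ _ (fun a b ha hb => ha.add hb) Matrix.PosSemidef.zero ?_
    exact fun τ _ => hMpsd τ
  have hlamI : (lam • (1 : Matrix (Fin d) (Fin d) ℝ)).PosDef := by
    rw [smul_one_eq_diagonal]
    exact Matrix.PosDef.diagonal fun _ => hlam0
  have hVpd : ∀ t, (Vmat t).PosDef := by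
    intro t; rw [hVmat t]; exact hlamI.add_posSemidef (hSpsd t)
  -- dot-self and norm
  have hdotself : ∀ t, ∀ i ∈ s t, (0:ℝ) ≤ (x t i : Fin d → ℝ) ⬝ᵥ (x t i : Fin d → ℝ) ∧
      (x t i : Fin d → ℝ) ⬝ᵥ (x t i : Fin d → ℝ) ≤ 1 := by
    intro t i hi
    have hnorm : ‖x t i‖^2 = (x t i : Fin d → ℝ) ⬝ᵥ (x t i : Fin d → ℝ) := by
      rw [EuclideanSpace.norm_eq]
      rw [Real.sq_sqrt (by positivity)]
      simp [dotProduct, sq]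
    constructor
    · rw [← hnorm]; positivity
    · rw [← hnorm]
      have := hx t i hi
      nlinarith [norm_nonneg (x t i)]
  -- quadratic form bounds
  set q : ℕ → Fin k → ℝ := fun t i => (x t i : Fin d → ℝ) ⬝ᵥ (Vmat t)⁻¹.mulVec (x t i) with hq
  have hqnonneg : ∀ t, ∀ i ∈ s t, 0 ≤ q t i := by
    intro t i _
    have := ((hVpd t).inv).posSemidef.dotProduct_mulVec_nonneg (x t i : Fin d → ℝ)
    simpa [hq] using this
  have hqle : ∀ t, ∀ i ∈ s t, q t i ≤ 1 / lam := by
    intro t i hi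
    set A := Vmat t with hA
    set v : Fin d → ℝ := (x t i : Fin d → ℝ) with hv
    set y : Fin d → ℝ := A⁻¹.mulVec v with hy
    have hAy : A.mulVec y = v := by
      rw [hy, Matrix.mulVec_mulVec, mul_nonsing_inv _ (hVpd t).det_pos.ne'.isUnit,
        Matrix.one_mulVec]
    -- lam * (y ⬝ᵥ y) ≤ q
    have hpsd : (A - lam • (1 : Matrix (Fin d) (Fin d) ℝ)).PosSemidef := by
      have : A - lam • (1 : Matrix (Fin d) (Fin d) ℝ)
          = ∑ τ ∈ Finset.range t, ∑ i ∈ s τ, vecMulVec (x τ i) (x τ i) := by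
        rw [hA, hVmat t]; abel
      rw [this]; exact hSpsd t
    have h1 : lam * (y ⬝ᵥ y) ≤ v ⬝ᵥ y := by
      have h0 := hpsd.dotProduct_mulVec_nonneg y
      simp only [star_trivial, Matrix.sub_mulVec, dotProduct_sub, Matrix.smul_mulVec,
        Matrix.one_mulVec, dotProduct_smul, smul_eq_mul, sub_nonneg, hAy] at h0
      calc lam * (y ⬝ᵥ y) ≤ y ⬝ᵥ v := h0
        _ = v ⬝ᵥ y := dotProduct_comm _ _
    have hCS : (v ⬝ᵥ y)^2 ≤ (v ⬝ᵥ v) * (y ⬝ᵥ y) := by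
      simpa [dotProduct, sq] using Finset.sum_mul_sq_le_sq_mul_sq Finset.univ v y
    have hq0 : 0 ≤ v ⬝ᵥ y := hqnonneg t i hi
    have hvv : v ⬝ᵥ v ≤ 1 := (hdotself t i hi).2
    have hvv0 : 0 ≤ v ⬝ᵥ v := (hdotself t i hi).1
    have : v ⬝ᵥ y ≤ 1 / lam := by
      rcases eq_or_lt_of_le hq0 with h | h
      · rw [← h]; positivity
      · rw [le_div_iff₀ hlam0]
        nlinarith [mul_le_mul_of_nonneg_left hCS hlam0.le,
          mul_le_mul_of_nonneg_left h1 hvv0, mul_pos hlam0 h,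
          mul_le_mul_of_nonneg_right hvv h.le]
    exact this
  -- per-round sums a_t
  set a : ℕ → ℝ := fun t => ∑ i ∈ s t, q t i with ha
  have ha0 : ∀ t, 0 ≤ a t := fun t => Finset.sum_nonneg (hqnonneg t)
  have ha1 : ∀ t, a t ≤ 1 := by
    intro t
    calc a t ≤ ∑ _i ∈ s t, (1/lam) := Finset.sum_le_sum (hqle t)
      _ = (s t).card * (1/lam) := by rw [Finset.sum_const, nsmul_eq_mul]
      _ ≤ ℓ * (1/lam) := by
          apply mul_le_mul_of_nonneg_right _ (by positivity)
          exact_mod_cast hcard t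
      _ ≤ lam * (1/lam) := mul_le_mul_of_nonneg_right hlam (by positivity)
      _ = 1 := by field_simp
  -- the determinant recursion
  have hstep : ∀ t, (Vmat t).det * (1 + a t) ≤ (Vmat (t+1)).det := by
    intro t
    have hrec : Vmat (t+1) = Vmat t + ∑ i ∈ s t, vecMulVec (x t i) (x t i) := by
      rw [hVmat (t+1), hVmat t, Finset.sum_range_succ]; abel
    have htr : ((Vmat t)⁻¹ * ∑ i ∈ s t, vecMulVec (x t i) (x t i)).trace = a t := by
      rw [Finset.mul_sum, Matrix.trace_sum]
      exact Finset.sum_congr rfl fun i _ => epl_trace_mul_vecMulVec _ _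
    have := epl_det_add_psd (hVpd t) (hMpsd t)
    rw [htr] at this
    rwa [hrec]
  have hdet0 : (Vmat 0).det = lam ^ d := by
    rw [hVmat 0]
    simp [det_smul]
  -- telescoping in log
  have hlogstep : ∀ t, Real.log (Vmat t).det + Real.log (1 + a t) ≤ Real.log (Vmat (t+1)).det := by
    intro t
    have h1 : (0:ℝ) < (Vmat t).det * (1 + a t) := by
      have := (hVpd t).det_pos; nlinarith [ha0 t]
    calc Real.log (Vmat t).det + Real.log (1 + a t)
        = Real.log ((Vmat t).det * (1 + a t)) := by
          rw [Real.log_mul (hVpd t).det_pos.ne' (by nlinarith [ha0 t])]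
      _ ≤ Real.log (Vmat (t+1)).det := Real.log_le_log h1 (hstep t)
  have htel : ∀ T', (d:ℝ) * Real.log lam + ∑ t ∈ Finset.range T', Real.log (1 + a t)
      ≤ Real.log (Vmat T').det := by
    intro T'
    induction T' with
    | zero => simp [hdet0, Real.log_pow]
    | succ n ih =>
      rw [Finset.sum_range_succ]
      have := hlogstep n
      linarith
  -- first inequality
  have hfirst : ∑ t ∈ Finset.range T, ∑ i ∈ s t, q t i
      ≤ 2 * Real.log (Vmat T).det - 2 * d * Real.log lam := by
    calc ∑ t ∈ Finset.range T, ∑ i ∈ s t, q t i = ∑ t ∈ Finset.range T, a t := rfl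
      _ ≤ ∑ t ∈ Finset.range T, 2 * Real.log (1 + a t) :=
          Finset.sum_le_sum fun t _ => epl_self_le_two_log (a t) (ha0 t) (ha1 t)
      _ = 2 * ∑ t ∈ Finset.range T, Real.log (1 + a t) := by rw [Finset.mul_sum]
      _ ≤ 2 * (Real.log (Vmat T).det - d * Real.log lam) := by
          have := htel T; linarith
      _ = 2 * Real.log (Vmat T).det - 2 * d * Real.log lam := by ring
  refine ⟨hfirst, ?_⟩
  -- second inequality
  have hH := (hVpd T).isHermitian
  have hev : ∀ i, 0 < hH.eigenvalues i := (hVpd T).eigenvalues_pos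
  have hne : Nonempty (Fin d) := ⟨⟨0, hd⟩⟩
  have hcardd : (Fintype.card (Fin d) : ℝ) = (d:ℝ) := by simp
  have hlogdet : Real.log (Vmat T).det = ∑ i, Real.log (hH.eigenvalues i) := by
    have : (Vmat T).det = ∏ i, hH.eigenvalues i := by
      have := hH.det_eq_prod_eigenvalues
      simpa using this
    rw [this, Real.log_prod]
    exact fun i _ => (hev i).ne'
  have htr_eq : (Vmat T).trace = ∑ i, hH.eigenvalues i := epl_trace_eq_sum_eigenvalues hH
  -- trace bound
  have htrace_le : (Vmat T).trace ≤ lam * d + T * ℓ := by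
    rw [hVmat T]
    rw [Matrix.trace_add, Matrix.trace_smul, Matrix.trace_one]
    have h1 : (∑ τ ∈ Finset.range T, ∑ i ∈ s τ, vecMulVec (x τ i) (x τ i)).trace
        = ∑ τ ∈ Finset.range T, ∑ i ∈ s τ, ((x τ i : Fin d → ℝ) ⬝ᵥ (x τ i : Fin d → ℝ)) := by
      rw [Matrix.trace_sum]
      refine Finset.sum_congr rfl fun τ _ => ?_
      rw [Matrix.trace_sum]
      refine Finset.sum_congr rfl fun i _ => ?_
      simp [Matrix.trace, vecMulVec_apply, dotProduct, diag]
    rw [h1]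
    have h2 : ∑ τ ∈ Finset.range T, ∑ i ∈ s τ, ((x τ i : Fin d → ℝ) ⬝ᵥ (x τ i : Fin d → ℝ))
        ≤ (T:ℝ) * ℓ := by
      calc ∑ τ ∈ Finset.range T, ∑ i ∈ s τ, ((x τ i : Fin d → ℝ) ⬝ᵥ (x τ i : Fin d → ℝ))
          ≤ ∑ τ ∈ Finset.range T, (ℓ:ℝ) := by
            refine Finset.sum_le_sum fun τ _ => ?_
            calc ∑ i ∈ s τ, ((x τ i : Fin d → ℝ) ⬝ᵥ (x τ i : Fin d → ℝ))
                ≤ ∑ _i ∈ s τ, (1:ℝ) := Finset.sum_le_sum fun i hi => (hdotself τ i hi).2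
              _ = (s τ).card := by simp
              _ ≤ (ℓ:ℝ) := by exact_mod_cast hcard τ
        _ = (T:ℝ) * ℓ := by rw [Finset.sum_const, Finset.card_range, nsmul_eq_mul]
    simp only [smul_eq_mul, hcardd]
    linarith
  have htrace_pos : (0:ℝ) < lam * d := by positivity
  have htrace_lb : lam * d ≤ (Vmat T).trace := by
    rw [hVmat T, Matrix.trace_add, Matrix.trace_smul, Matrix.trace_one]
    have := (hSpsd T).2
    have htrnn : 0 ≤ (∑ τ ∈ Finset.range T, ∑ i ∈ s τ, vecMulVec (x τ i) (x τ i)).trace := by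
      rw [Matrix.trace_sum]
      refine Finset.sum_nonneg fun τ _ => ?_
      rw [Matrix.trace_sum]
      refine Finset.sum_nonneg fun i _ => ?_
      have heq : (vecMulVec (x τ i) (x τ i)).trace
          = ∑ j, x τ i j * x τ i j := by
        simp [Matrix.trace, vecMulVec_apply, diag]
      rw [heq]
      exact Finset.sum_nonneg fun j _ => mul_self_nonneg _
    simp only [smul_eq_mul, hcardd]
    linarith
  -- Jensen
  have hjensen : Real.log (Vmat T).det ≤ (d:ℝ) * Real.log ((Vmat T).trace / d) := by
    rw [hlogdet]
    have := epl_sum_log_le hH.eigenvalues hev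
    rw [hcardd, ← htr_eq] at this
    exact this
  have hd0 : (0:ℝ) < (d:ℝ) := by exact_mod_cast hd
  have htrd_pos : 0 < (Vmat T).trace / d := by
    apply div_pos (lt_of_lt_of_le htrace_pos htrace_lb) hd0
  have hlog2 : Real.log ((Vmat T).trace / d) - Real.log lam
      = Real.log ((Vmat T).trace / (lam * d)) := by
    rw [← Real.log_div htrd_pos.ne' hlam0.ne', div_div, mul_comm (d:ℝ) lam]
  have hmono : Real.log ((Vmat T).trace / (lam * d))
      ≤ Real.log ((lam * d + T * ℓ) / (lam * d)) := by
    apply Real.log_le_log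
    · exact div_pos (lt_of_lt_of_le htrace_pos htrace_lb) htrace_pos
    · exact (div_le_div_iff_of_pos_right htrace_pos).mpr htrace_le
  calc 2 * Real.log (Vmat T).det - 2 * d * Real.log lam
      ≤ 2 * ((d:ℝ) * Real.log ((Vmat T).trace / d)) - 2 * d * Real.log lam := by linarith
    _ = 2 * d * (Real.log ((Vmat T).trace / d) - Real.log lam) := by ring
    _ = 2 * d * Real.log ((Vmat T).trace / (lam * d)) := by rw [hlog2]
    _ ≤ 2 * d * Real.log ((lam * d + T * ℓ) / (lam * d)) := by
        apply mul_le_mul_of_nonneg_left hmono (by positivity)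
end

section
/- Greedy guarantee for cardinality/knapsack-free setting: Let f : 2^[k] → ℝ≥0 be a monotone submodular set function with f(∅) = 0, and let the greedy algorithm pick, over m steps, the element with the largest marginal gain. Then the greedy solution G of size m satisfies f(G) ≥ (1 − 1/e)·max_{|S| ≤ m} f(S). -/
open BigOperators

lemma stmt15_aux {k : ℕ} (f : Finset (Fin k) → ℝ)
    (hsubmod : ∀ S T : Finset (Fin k), ∀ x : Fin k, S ⊆ T → x ∉ T →
      f (insert x T) - f T ≤ f (insert x S) - f S)
    (A B : Finset (Fin k)) :
    f (A ∪ B) - f B ≤ ∑ x ∈ A \ B, (f (insert x B) - f B) := by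
  induction A using Finset.induction_on with
  | empty => simp
  | @insert a A ha ih =>
    by_cases hab : a ∈ B
    · have h1 : insert a A ∪ B = A ∪ B := by
        rw [Finset.insert_union, Finset.insert_eq_self.mpr (Finset.mem_union_right _ hab)]
      have h2 : insert a A \ B = A \ B := Finset.insert_sdiff_of_mem _ hab
      rw [h1, h2]; exact ih
    · have h1 : insert a A ∪ B = insert a (A ∪ B) := Finset.insert_union _ _ _
      have h2 : insert a A \ B = insert a (A \ B) := by
        ext y
        simp only [Finset.mem_insert, Finset.mem_sdiff]
        constructor
        · rintro ⟨(rfl | h), hy⟩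
          · exact Or.inl rfl
          · exact Or.inr ⟨h, hy⟩
        · rintro (rfl | ⟨h, hy⟩)
          · exact ⟨Or.inl rfl, hab⟩
          · exact ⟨Or.inr h, hy⟩
      have hna : a ∉ A \ B := fun h => ha (Finset.mem_sdiff.mp h).1
      have haAB : a ∉ A ∪ B := by simp [Finset.mem_union, ha, hab]
      have hsub := hsubmod B (A ∪ B) a Finset.subset_union_right haAB
      rw [h1, h2, Finset.sum_insert hna]
      linarith

/-- Nemhauser–Wolsey–Fisher greedy guarantee: for a monotone submodular
nonnegative set function with f(∅)=0, the m-step greedy solution G satisfies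
f(G) ≥ (1 − 1/e)·max_{|S| ≤ m} f(S). -/
theorem stmt15 {k : ℕ} (m : ℕ) (f : Finset (Fin k) → ℝ)
    (hnn : ∀ S, 0 ≤ f S)
    (hempty : f ∅ = 0)
    (hmono : ∀ S T : Finset (Fin k), S ⊆ T → f S ≤ f T)
    (hsubmod : ∀ S T : Finset (Fin k), ∀ x : Fin k, S ⊆ T → x ∉ T →
      f (insert x T) - f T ≤ f (insert x S) - f S)
    (G : ℕ → Finset (Fin k))
    (hG0 : G 0 = ∅)
    (hgreedy : ∀ j < m, ∃ x : Fin k, G (j + 1) = insert x (G j) ∧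
      ∀ y : Fin k, f (insert y (G j)) ≤ f (insert x (G j))) :
    ∀ S : Finset (Fin k), S.card ≤ m →
      (1 - 1 / Real.exp 1) * f S ≤ f (G m) := by
  intro S hS
  rcases Nat.eq_zero_or_pos m with rfl | hm
  · have : S = ∅ := Finset.card_eq_zero.mp (Nat.le_zero.mp hS)
    subst this
    rw [hempty, mul_zero]
    exact hnn _
  have hmR : (0:ℝ) < m := by exact_mod_cast hm
  have hrat : (0:ℝ) ≤ 1 - 1 / m := by
    rw [sub_nonneg]
    rw [div_le_one hmR]
    exact_mod_cast hm
  -- main induction: f S - f (G j) ≤ (1 - 1/m)^j * f S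
  have key : ∀ j ≤ m, f S - f (G j) ≤ (1 - 1 / (m:ℝ))^j * f S := by
    intro j hj
    induction j with
    | zero => simp [hG0, hempty]
    | succ j ih =>
      have hjm : j < m := hj
      have ihj := ih (Nat.le_of_lt hjm)
      obtain ⟨x, hx1, hx2⟩ := hgreedy j hjm
      set c : ℝ := f (G (j+1)) - f (G j) with hc
      have hc0 : 0 ≤ c := by
        rw [hc, hx1, sub_nonneg]
        exact hmono _ _ (Finset.subset_insert x _)
      -- sum bound
      have hsum := stmt15_aux f hsubmod S (G j)
      have hterm : ∀ y ∈ S \ G j, f (insert y (G j)) - f (G j) ≤ c := by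
        intro y _
        rw [hc, hx1]
        linarith [hx2 y]
      have hsum2 : ∑ y ∈ S \ G j, (f (insert y (G j)) - f (G j))
          ≤ (S \ G j).card * c := by
        calc ∑ y ∈ S \ G j, (f (insert y (G j)) - f (G j))
            ≤ ∑ _y ∈ S \ G j, c := Finset.sum_le_sum hterm
          _ = (S \ G j).card * c := by rw [Finset.sum_const, nsmul_eq_mul]
      have hcard : ((S \ G j).card : ℝ) ≤ m := by
        have : (S \ G j).card ≤ S.card := Finset.card_le_card (Finset.sdiff_subset)
        exact_mod_cast le_trans this hS
      have hcardc : ((S \ G j).card : ℝ) * c ≤ m * c :=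
        mul_le_mul_of_nonneg_right hcard hc0
      have hfS : f S ≤ f (S ∪ G j) := hmono _ _ Finset.subset_union_left
      have hmain : f S - f (G j) ≤ m * c := by linarith
      have hcge : (f S - f (G j)) / m ≤ c := by
        rw [div_le_iff₀ hmR]; linarith [hmain]
      have hstep : f S - f (G (j+1)) ≤ (1 - 1/(m:ℝ)) * (f S - f (G j)) := by
        have : f S - f (G (j+1)) = (f S - f (G j)) - c := by rw [hc]; ring
        rw [this]
        have : (1 - 1/(m:ℝ)) * (f S - f (G j))
            = (f S - f (G j)) - (f S - f (G j)) / m := by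
          field_simp
        rw [this]
        linarith [hcge]
      calc f S - f (G (j+1)) ≤ (1 - 1/(m:ℝ)) * (f S - f (G j)) := hstep
        _ ≤ (1 - 1/(m:ℝ)) * ((1 - 1/(m:ℝ))^j * f S) :=
            mul_le_mul_of_nonneg_left ihj hrat
        _ = (1 - 1/(m:ℝ))^(j+1) * f S := by ring
  have hfin := key m le_rfl
  -- (1 - 1/m)^m ≤ exp(-1) = 1 / exp 1
  have hexp1 : (1:ℝ) - 1/m ≤ Real.exp (-(1/m)) := by
    linarith [Real.add_one_le_exp (-(1/(m:ℝ)))]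
  have hpow : (1 - 1/(m:ℝ))^m ≤ (Real.exp (-(1/(m:ℝ))))^m :=
    pow_le_pow_left₀ hrat hexp1 m
  have hexp2 : (Real.exp (-(1/(m:ℝ))))^m = Real.exp (-1) := by
    rw [← Real.exp_nat_mul]
    congr 1
    field_simp
  have hfinal : (1 - 1/(m:ℝ))^m ≤ 1 / Real.exp 1 := by
    rw [hexp2, Real.exp_neg, ← one_div] at hpow
    exact hpow
  have hpowfS : (1 - 1/(m:ℝ))^m * f S ≤ (1 / Real.exp 1) * f S :=
    mul_le_mul_of_nonneg_right hfinal (hnn S)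
  linarith [hfin, hpowfS]
end
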